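/- Let P, Q : ℝ → ℝ be continuous functions, Y₀ a real number, and define X(t) := exp(−∫₀ᵗ P(l) dl) · (Y₀ − ∫₀ᵗ Q(ξ) · exp(∫₀^ξ P(l) dl) dξ). If Y : ℝ → ℝ is differentiable with Y(0) ≤ Y₀ and satisfies the differential inequality Y'(t) + P(t) Y(t) + Q(t) ≤ 0 for all t ≥ 0, then Y(t) ≤ X(t) for all t ≥ 0. -/

import Mathlib

/-- Comparison principle: if `Y` is differentiable with `Y 0 ≤ Y₀` and satisfies
`Y' + P Y + Q ≤ 0` on `[0,∞)`, then `Y ≤ X` on `[0,∞)`, where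
`X t := exp(−∫₀ᵗ P) · (Y₀ − ∫₀ᵗ Q(ξ) exp(∫₀^ξ P) dξ)`. -/
theorem stmt_8 (P Q : ℝ → ℝ) (hP : Continuous P) (hQ : Continuous Q) (Y₀ : ℝ)
    (X Y : ℝ → ℝ)
    (hX : ∀ t : ℝ, X t = Real.exp (-∫ l in (0:ℝ)..t, P l) *
        (Y₀ - ∫ ξ in (0:ℝ)..t, Q ξ * Real.exp (∫ l in (0:ℝ)..ξ, P l)))
    (hY : Differentiable ℝ Y) (hY0 : Y 0 ≤ Y₀)
    (hineq : ∀ t : ℝ, 0 ≤ t → deriv Y t + P t * Y t + Q t ≤ 0) :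
    ∀ t : ℝ, 0 ≤ t → Y t ≤ X t := by
  set F : ℝ → ℝ := fun t => ∫ l in (0:ℝ)..t, P l with hFdef
  have hFd : ∀ t, HasDerivAt F (P t) t := fun t =>
    (hP.integral_hasStrictDerivAt 0 t).hasDerivAt
  have hFc : Continuous F := by
    have : Differentiable ℝ F := fun t => (hFd t).differentiableAt
    exact this.continuous
  have hQF : Continuous fun ξ => Q ξ * Real.exp (F ξ) :=
    hQ.mul (Real.continuous_exp.comp hFc)
  set g : ℝ → ℝ := fun t => Y t * Real.exp (F t) +
    ∫ ξ in (0:ℝ)..t, Q ξ * Real.exp (F ξ) with hgdef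
  have hgd : ∀ t, HasDerivAt g
      ((deriv Y t + P t * Y t + Q t) * Real.exp (F t)) t := by
    intro t
    have h1 : HasDerivAt (fun t => Y t * Real.exp (F t))
        (deriv Y t * Real.exp (F t) + Y t * (Real.exp (F t) * P t)) t :=
      ((hY t).hasDerivAt).mul ((hFd t).exp)
    have h2 : HasDerivAt (fun t => ∫ ξ in (0:ℝ)..t, Q ξ * Real.exp (F ξ))
        (Q t * Real.exp (F t)) t :=
      (hQF.integral_hasStrictDerivAt 0 t).hasDerivAt
    have := h1.add h2
    exact this.congr_deriv (by ring)
  have hganti : AntitoneOn g (Set.Ici (0:ℝ)) := by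
    apply antitoneOn_of_deriv_nonpos (convex_Ici 0)
    · exact (Differentiable.continuous (fun t => (hgd t).differentiableAt)).continuousOn
    · intro x hx
      exact ((hgd x).differentiableAt).differentiableWithinAt
    · intro x hx
      rw [interior_Ici] at hx
      rw [(hgd x).deriv]
      have := hineq x (le_of_lt hx)
      nlinarith [Real.exp_pos (F x)]
  intro t ht
  have hgt : g t ≤ g 0 := hganti (by simp) (Set.mem_Ici.mpr ht) ht
  have hg0 : g 0 = Y 0 := by
    simp [hgdef, hFdef]
  have key : Y t * Real.exp (F t) + (∫ ξ in (0:ℝ)..t, Q ξ * Real.exp (F ξ)) ≤ Y₀ := by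
    have : g t ≤ Y₀ := by rw [hg0] at hgt; linarith
    simpa [hgdef] using this
  rw [hX t, Real.exp_neg]
  rw [inv_mul_eq_div, le_div_iff₀ (Real.exp_pos (F t))]
  simp only [hFdef] at key ⊢
  linarith
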